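/- For every x ∈ H, ⟨x, P((S + R·id)⁻¹(S(P x)))⟩ ≥ (‖S‖ + R)⁻¹·⟨P x, S(P x)⟩, where ‖S‖ denotes the operator norm of S; consequently, if ⟨v, S v⟩ > 0 for every nonzero v ∈ V, then the operator Λ_{*,R} : V → V obtained by restricting P∘(S + R·id)⁻¹∘S∘P to V is invertible (the lower bound Λ_{*,R} ≥ (‖S‖ + R)⁻¹·S_add of Appendix A.0.8). -/

import Mathlib

open scoped RealInnerProductSpace

/-- For a self-adjoint PSD operator, `‖S w‖² ≤ ‖S‖ ⟪w, S w⟫`. -/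
lemma aux_norm_sq_le {H : Type*} [NormedAddCommGroup H] [InnerProductSpace ℝ H]
    (S : H →L[ℝ] H)
    (hS_sym : ∀ x y : H, ⟪S x, y⟫ = ⟪x, S y⟫)
    (hS_psd : ∀ x : H, 0 ≤ ⟪x, S x⟫) (w : H) :
    ⟪S w, S w⟫ ≤ ‖S‖ * ⟪w, S w⟫ := by
  set a : ℝ := ⟪S w, S (S w)⟫ with ha_def
  set b : ℝ := ⟪S w, S w⟫ with hb_def
  set c : ℝ := ⟪w, S w⟫ with hc_def
  have hb0 : 0 ≤ b := real_inner_self_nonneg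
  have hc0 : 0 ≤ c := hS_psd w
  have hnS : 0 ≤ ‖S‖ := norm_nonneg S
  have hq : ∀ t : ℝ, 0 ≤ a * (t * t) + (2 * b) * t + c := by
    intro t
    have h := hS_psd (w + t • S w)
    have hexp : ⟪w + t • S w, S (w + t • S w)⟫ = a * (t * t) + (2 * b) * t + c := by
      have hsym : ⟪w, S (S w)⟫ = b := by rw [← hS_sym]
      simp only [map_add, map_smul, inner_add_left, inner_add_right,
        inner_smul_left, inner_smul_right, RCLike.conj_to_real]
      rw [hsym, ← ha_def, ← hb_def, ← hc_def]
      ring_nf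
    rw [hexp] at h
    exact h
  have hdisc := discrim_le_zero hq
  rw [discrim] at hdisc
  have hbac : b ^ 2 ≤ a * c := by nlinarith
  have ha_le : a ≤ ‖S‖ * b := by
    have h1 : ⟪S w, S (S w)⟫ ≤ ‖S w‖ * ‖S (S w)‖ := real_inner_le_norm _ _
    have h2 : ‖S (S w)‖ ≤ ‖S‖ * ‖S w‖ := S.le_opNorm _
    have h3 : b = ‖S w‖ * ‖S w‖ := real_inner_self_eq_norm_mul_norm (S w)
    nlinarith [norm_nonneg (S w)]
  -- conclude b ≤ ‖S‖ * c
  rcases eq_or_lt_of_le hb0 with h | h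
  · rw [← h]; positivity
  · nlinarith

theorem lambda_lower_bound_and_invertible
    {H : Type*} [NormedAddCommGroup H] [InnerProductSpace ℝ H] [FiniteDimensional ℝ H]
    (S : H →L[ℝ] H)
    (hS_sym : ∀ x y : H, ⟪S x, y⟫ = ⟪x, S y⟫)
    (hS_psd : ∀ x : H, 0 ≤ ⟪x, S x⟫)
    (V : Submodule ℝ H)
    (P : H →L[ℝ] H) (hP : ∀ x : H, P x = (V.orthogonalProjectionOnto x : H))
    (R : ℝ) (hR : 0 < R)
    (T : H →L[ℝ] H)
    (hT1 : T * (S + R • 1) = 1) (hT2 : (S + R • 1) * T = 1) :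
    (∀ x : H, (‖S‖ + R)⁻¹ * ⟪P x, S (P x)⟫ ≤ ⟪x, P (T (S (P x)))⟫) ∧
      ((∀ v ∈ V, v ≠ 0 → 0 < ⟪v, S v⟫) →
        ∀ w ∈ V, ∃! v : H, v ∈ V ∧ P (T (S v)) = w) := by
  have hpos_norm : 0 < ‖S‖ + R := by positivity
  -- P is self-adjoint
  have hPsym : ∀ x y : H, ⟪P x, y⟫ = ⟪x, P y⟫ := by
    intro x y
    rw [hP x, hP y]
    exact V.inner_starProjection_left_eq_right x y
  -- T commutes with S
  have hcomm : T * S = S * T := by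
    have hSA : S * (S + R • 1) = (S + R • 1) * S := by
      simp [mul_add, add_mul, mul_smul_comm, smul_mul_assoc]
    calc T * S = T * S * ((S + R • 1) * T) := by rw [hT2, mul_one]
      _ = T * (S * (S + R • 1)) * T := by simp only [mul_assoc]
      _ = T * ((S + R • 1) * S) * T := by rw [hSA]
      _ = (T * (S + R • 1)) * (S * T) := by simp only [mul_assoc]
      _ = S * T := by rw [hT1, one_mul]
  -- main inequality
  have main : ∀ x : H, (‖S‖ + R)⁻¹ * ⟪P x, S (P x)⟫ ≤ ⟪x, P (T (S (P x)))⟫ := by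
    intro x
    set u : H := P x with hu_def
    set w : H := T u with hw_def
    have hu : S w + R • w = u := by
      have h := congrArg (fun f : H →L[ℝ] H => f u) hT2
      simpa [ContinuousLinearMap.mul_apply, ContinuousLinearMap.add_apply,
        ContinuousLinearMap.smul_apply, ContinuousLinearMap.one_apply] using h
    have hTSu : T (S u) = S w := by
      calc T (S u) = (T * S) u := rfl
        _ = (S * T) u := by rw [hcomm]
        _ = S w := rfl
    have hRHS : ⟪x, P (T (S u))⟫ = ⟪u, S w⟫ := by
      rw [← hPsym, hTSu]
    rw [hRHS]
    set a : ℝ := ⟪S w, S (S w)⟫ with ha_def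
    set b : ℝ := ⟪S w, S w⟫ with hb_def
    set c : ℝ := ⟪w, S w⟫ with hc_def
    have hb0 : (0:ℝ) ≤ b := real_inner_self_nonneg
    have hc0 : (0:ℝ) ≤ c := hS_psd w
    have hnS : (0:ℝ) ≤ ‖S‖ := norm_nonneg S
    have ha_le : a ≤ ‖S‖ * b := by
      have h1 : ⟪S w, S (S w)⟫ ≤ ‖S w‖ * ‖S (S w)‖ := real_inner_le_norm _ _
      have h2 : ‖S (S w)‖ ≤ ‖S‖ * ‖S w‖ := S.le_opNorm _
      have h3 : b = ‖S w‖ * ‖S w‖ := real_inner_self_eq_norm_mul_norm (S w)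
      nlinarith [norm_nonneg (S w)]
    have hb_le : b ≤ ‖S‖ * c := aux_norm_sq_le S hS_sym hS_psd w
    have hswb : ⟪w, S (S w)⟫ = b := by rw [← hS_sym]
    have hRHS2 : ⟪u, S w⟫ = b + R * c := by
      rw [← hu]
      simp only [inner_add_left, inner_smul_left, RCLike.conj_to_real]
      rw [← hb_def, ← hc_def]
    have hLHS2 : ⟪u, S u⟫ = a + 2 * R * b + R ^ 2 * c := by
      rw [← hu]
      simp only [map_add, map_smul, inner_add_left, inner_add_right,
        inner_smul_left, inner_smul_right, RCLike.conj_to_real]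
      rw [hswb, ← ha_def, ← hb_def, ← hc_def]
      ring
    rw [hRHS2, hLHS2]
    rw [inv_mul_le_iff₀ hpos_norm]
    nlinarith
  refine ⟨main, ?_⟩
  intro hposV w hw
  -- P maps into V
  have hmem : ∀ y : H, P y ∈ V := by
    intro y; rw [hP]; exact (V.orthogonalProjectionOnto y).2
  have hPid : ∀ v : H, v ∈ V → P v = v := by
    intro v hv
    rw [hP]
    exact V.starProjection_eq_self_iff.mpr hv
  -- the operator on V
  let f : V →ₗ[ℝ] V :=
    { toFun := fun v => ⟨P (T (S v)), hmem _⟩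
      map_add' := fun v v' => by ext; simp [map_add]
      map_smul' := fun r v => by ext; simp [map_smul] }
  have hfinj : Function.Injective f := by
    rw [injective_iff_map_eq_zero]
    intro v hv0
    have hv0' : P (T (S (v : H))) = 0 := congrArg Subtype.val hv0
    by_contra hne
    have hvne : (v : H) ≠ 0 := fun h => hne (Subtype.ext h)
    have hposv := hposV v v.2 hvne
    have h := main (v : H)
    rw [hPid v v.2, hv0'] at h
    simp only [inner_zero_right] at h
    have : 0 < (‖S‖ + R)⁻¹ * ⟪(v:H), S v⟫ := by positivity
    linarith
  have hfsurj : Function.Surjective f := LinearMap.injective_iff_surjective.mp hfinj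
  obtain ⟨v, hv⟩ := hfsurj ⟨w, hw⟩
  refine ⟨v, ⟨v.2, congrArg Subtype.val hv⟩, ?_⟩
  rintro v' ⟨hv'V, hv'eq⟩
  have : f ⟨v', hv'V⟩ = ⟨w, hw⟩ := Subtype.ext hv'eq
  have := hfinj (this.trans hv.symm)
  exact congrArg Subtype.val this
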